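/- Let 0 < h ≤ 1, 0 < p ≤ 1 and c₁, c₂, c₃, c₄ ≥ 0. Let u, ũ, u_h : ℝ² → ℝ be differentiable and suppose: (i) ‖u − ũ‖_E ≤ c₁ h; (ii) ‖ũ − u_h‖_Ẽ ≤ c₂ h^p; (iii) |‖ũ − u_h‖_E² − ‖ũ − u_h‖_Ẽ²| ≤ c₃ h²; (iv) the Galerkin orthogonality identity ‖ũ − u_h‖_Ẽ² = ‖ũ‖_Ẽ² − ‖u_h‖_Ẽ²; (v) |‖u‖_E² − ‖ũ‖_Ẽ²| ≤ c₄ h². Then ‖u − u_h‖_E² ≤ |‖u‖_E² − ‖u_h‖_Ẽ²| + C h^{1+p}, where C := 2c₁(c₂ + √c₃) + c₁² + c₃ + c₄. -/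

import Mathlib

open MeasureTheory

/-- The energy norm `‖v‖ = (∫_Ω a ‖∇v‖² dx)^{1/2}` associated with a coefficient
function `a` on the set `Ω`. -/
noncomputable def energyNorm (Ω : Set (EuclideanSpace ℝ (Fin 2)))
    (a : EuclideanSpace ℝ (Fin 2) → ℝ) (v : EuclideanSpace ℝ (Fin 2) → ℝ) : ℝ :=
  Real.sqrt (∫ x in Ω, a x * ‖gradient v x‖ ^ 2)

private lemma aux_sqrt_bound {x y s : ℝ} (hx : 0 ≤ x) (hy : 0 ≤ y) (hs : 0 ≤ s)
    (hxy : x ^ 2 - y ^ 2 ≤ s ^ 2) : x ≤ y + s := by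
  nlinarith [mul_nonneg hy hs]

private lemma aux_le_of_sq_le_sq {C D : ℝ} (hD : 0 ≤ D) (h : C ^ 2 ≤ D ^ 2) : C ≤ D := by
  nlinarith

set_option maxHeartbeats 1000000 in
theorem stmt_9
    (Ω : Set (EuclideanSpace ℝ (Fin 2)))
    (hΩmeas : MeasurableSet Ω) (hΩfin : volume Ω < ⊤)
    (a atil : EuclideanSpace ℝ (Fin 2) → ℝ)
    (hameas : Measurable a) (hatilmeas : Measurable atil)
    (ha_nonneg : ∀ x ∈ Ω, 0 ≤ a x) (hatil_nonneg : ∀ x ∈ Ω, 0 ≤ atil x)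
    (h p c₁ c₂ c₃ c₄ : ℝ)
    (hh0 : 0 < h) (hh1 : h ≤ 1) (hp0 : 0 < p) (hp1 : p ≤ 1)
    (hc₁ : 0 ≤ c₁) (hc₂ : 0 ≤ c₂) (hc₃ : 0 ≤ c₃) (hc₄ : 0 ≤ c₄)
    (u util uh : EuclideanSpace ℝ (Fin 2) → ℝ)
    (hu : Differentiable ℝ u) (hutil : Differentiable ℝ util) (huh : Differentiable ℝ uh)
    (hint1 : IntegrableOn (fun x => a x * ‖gradient u x‖ ^ 2) Ω)
    (hint2 : IntegrableOn (fun x => atil x * ‖gradient util x‖ ^ 2) Ω)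
    (hint3 : IntegrableOn (fun x => atil x * ‖gradient uh x‖ ^ 2) Ω)
    (hint4 : IntegrableOn (fun x => a x * ‖gradient (u - util) x‖ ^ 2) Ω)
    (hint5 : IntegrableOn (fun x => a x * ‖gradient (util - uh) x‖ ^ 2) Ω)
    (hint6 : IntegrableOn (fun x => atil x * ‖gradient (util - uh) x‖ ^ 2) Ω)
    (hint7 : IntegrableOn (fun x => a x * ‖gradient (u - uh) x‖ ^ 2) Ω)
    (h1 : energyNorm Ω a (u - util) ≤ c₁ * h)
    (h2 : energyNorm Ω atil (util - uh) ≤ c₂ * h ^ p)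
    (h3 : |energyNorm Ω a (util - uh) ^ 2 - energyNorm Ω atil (util - uh) ^ 2| ≤ c₃ * h ^ 2)
    (h4 : energyNorm Ω atil (util - uh) ^ 2
        = energyNorm Ω atil util ^ 2 - energyNorm Ω atil uh ^ 2)
    (h5 : |energyNorm Ω a u ^ 2 - energyNorm Ω atil util ^ 2| ≤ c₄ * h ^ 2) :
    energyNorm Ω a (u - uh) ^ 2
      ≤ |energyNorm Ω a u ^ 2 - energyNorm Ω atil uh ^ 2|
        + (2 * c₁ * (c₂ + Real.sqrt c₃) + c₁ ^ 2 + c₃ + c₄) * h ^ (1 + p) := by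
  classical
  -- gradient splits
  have hgr : ∀ x, gradient (u - uh) x
      = gradient (u - util) x + gradient (util - uh) x := by
    intro x
    have d1 : DifferentiableAt ℝ (u - util) x := (hu x).sub (hutil x)
    have d2 : DifferentiableAt ℝ (util - uh) x := (hutil x).sub (huh x)
    have hsplit : u - uh = (u - util) + (util - uh) := by
      funext y; simp
    rw [hsplit]
    show (InnerProductSpace.toDual ℝ _).symm (fderiv ℝ ((u - util) + (util - uh)) x) = _
    rw [fderiv_add d1 d2, map_add]
    rfl
  have hint7' : IntegrableOn
      (fun x => a x * ‖gradient (u - util) x + gradient (util - uh) x‖ ^ 2) Ω := by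
    simpa only [hgr] using hint7
  -- pointwise expansion
  have hptw : ∀ x : EuclideanSpace ℝ (Fin 2),
      a x * ‖gradient (u - util) x + gradient (util - uh) x‖ ^ 2
        = a x * ‖gradient (u - util) x‖ ^ 2
          + 2 * (a x * (inner ℝ (gradient (u - util) x) (gradient (util - uh) x) : ℝ))
          + a x * ‖gradient (util - uh) x‖ ^ 2 := by
    intro x
    rw [norm_add_sq_real]; ring
  have hcross : IntegrableOn
      (fun x => a x * (inner ℝ (gradient (u - util) x) (gradient (util - uh) x) : ℝ)) Ω := by
    have heq : (fun x => a x * (inner ℝ (gradient (u - util) x) (gradient (util - uh) x) : ℝ))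
        = fun x => (a x * ‖gradient (u - util) x + gradient (util - uh) x‖ ^ 2
            - a x * ‖gradient (u - util) x‖ ^ 2 - a x * ‖gradient (util - uh) x‖ ^ 2) / 2 := by
      funext x; rw [hptw x]; ring
    rw [heq]
    exact ((hint7'.sub hint4).sub hint5).div_const 2
  set A2 : ℝ := ∫ x in Ω, a x * ‖gradient (u - util) x‖ ^ 2 with hA2def
  set B2 : ℝ := ∫ x in Ω, a x * ‖gradient (util - uh) x‖ ^ 2 with hB2def
  set C : ℝ := ∫ x in Ω,
    a x * (inner ℝ (gradient (u - util) x) (gradient (util - uh) x) : ℝ) with hCdef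
  have hA2 : 0 ≤ A2 :=
    setIntegral_nonneg hΩmeas fun x hx => mul_nonneg (ha_nonneg x hx) (sq_nonneg _)
  have hB2 : 0 ≤ B2 :=
    setIntegral_nonneg hΩmeas fun x hx => mul_nonneg (ha_nonneg x hx) (sq_nonneg _)
  -- quadratic in t is nonneg
  have hquad : ∀ t : ℝ, 0 ≤ B2 * (t * t) + (2 * C) * t + A2 := by
    intro t
    have i1 : IntegrableOn (fun x => a x * ‖gradient (util - uh) x‖ ^ 2 * (t * t)) Ω :=
      hint5.mul_const (t * t)
    have i2 : IntegrableOn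
        (fun x => a x * (inner ℝ (gradient (u - util) x) (gradient (util - uh) x) : ℝ)
          * (2 * t)) Ω :=
      hcross.mul_const (2 * t)
    have i12 : IntegrableOn (fun x => a x * ‖gradient (util - uh) x‖ ^ 2 * (t * t)
        + a x * (inner ℝ (gradient (u - util) x) (gradient (util - uh) x) : ℝ) * (2 * t)) Ω :=
      i1.add i2
    have hval : B2 * (t * t) + (2 * C) * t + A2
        = ∫ x in Ω, (a x * ‖gradient (util - uh) x‖ ^ 2 * (t * t)
            + a x * (inner ℝ (gradient (u - util) x) (gradient (util - uh) x) : ℝ) * (2 * t)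
            + a x * ‖gradient (u - util) x‖ ^ 2) := by
      rw [integral_add i12 hint4, integral_add i1 i2,
        integral_mul_const, integral_mul_const]
      ring
    rw [hval]
    apply setIntegral_nonneg hΩmeas
    intro x hx
    have hrw : a x * ‖gradient (util - uh) x‖ ^ 2 * (t * t)
        + a x * (inner ℝ (gradient (u - util) x) (gradient (util - uh) x) : ℝ) * (2 * t)
        + a x * ‖gradient (u - util) x‖ ^ 2
        = a x * ‖gradient (u - util) x + t • gradient (util - uh) x‖ ^ 2 := by
      rw [norm_add_sq_real, inner_smul_right, norm_smul]
      simp only [Real.norm_eq_abs, mul_pow, sq_abs]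
      ring
    rw [hrw]
    exact mul_nonneg (ha_nonneg x hx) (sq_nonneg _)
  -- Cauchy–Schwarz
  have hCS : C ≤ Real.sqrt A2 * Real.sqrt B2 := by
    have hd := discrim_le_zero hquad
    rw [discrim] at hd
    have hC2 : C ^ 2 ≤ A2 * B2 := by linear_combination hd / 4
    have hs : (Real.sqrt A2 * Real.sqrt B2) ^ 2 = A2 * B2 := by
      rw [mul_pow, Real.sq_sqrt hA2, Real.sq_sqrt hB2]
    exact aux_le_of_sq_le_sq
      (mul_nonneg (Real.sqrt_nonneg A2) (Real.sqrt_nonneg B2)) (by rw [hs]; exact hC2)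
  -- energy norms
  have hE1nn : (0:ℝ) ≤ energyNorm Ω a (u - util) := Real.sqrt_nonneg _
  have hE2nn : (0:ℝ) ≤ energyNorm Ω a (util - uh) := Real.sqrt_nonneg _
  have hEtnn : (0:ℝ) ≤ energyNorm Ω atil (util - uh) := Real.sqrt_nonneg _
  have hE1sq : energyNorm Ω a (u - util) ^ 2 = A2 := Real.sq_sqrt hA2
  have hE2sq : energyNorm Ω a (util - uh) ^ 2 = B2 := Real.sq_sqrt hB2
  have hE1eq : energyNorm Ω a (u - util) = Real.sqrt A2 := rfl
  have hE2eq : energyNorm Ω a (util - uh) = Real.sqrt B2 := rfl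
  -- main triangle inequality
  have hmain : energyNorm Ω a (u - uh) ^ 2
      ≤ (energyNorm Ω a (u - util) + energyNorm Ω a (util - uh)) ^ 2 := by
    have i2' : IntegrableOn
        (fun x => 2 * (a x
          * (inner ℝ (gradient (u - util) x) (gradient (util - uh) x) : ℝ))) Ω :=
      hcross.const_mul 2
    have hPint : (∫ x in Ω, a x * ‖gradient (u - uh) x‖ ^ 2) = A2 + 2 * C + B2 := by
      have hfe : (fun x => a x * ‖gradient (u - uh) x‖ ^ 2)
          = fun x => a x * ‖gradient (u - util) x‖ ^ 2
            + 2 * (a x * (inner ℝ (gradient (u - util) x) (gradient (util - uh) x) : ℝ))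
            + a x * ‖gradient (util - uh) x‖ ^ 2 := by
        funext x; rw [hgr x, hptw x]
      have i12' : IntegrableOn (fun x => a x * ‖gradient (u - util) x‖ ^ 2
          + 2 * (a x
            * (inner ℝ (gradient (u - util) x) (gradient (util - uh) x) : ℝ))) Ω :=
        hint4.add i2'
      rw [hfe, integral_add i12' hint5, integral_add hint4 i2',
        integral_const_mul]
    have hPnn : 0 ≤ ∫ x in Ω, a x * ‖gradient (u - uh) x‖ ^ 2 :=
      setIntegral_nonneg hΩmeas fun x hx => mul_nonneg (ha_nonneg x hx) (sq_nonneg _)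
    have hPsq : energyNorm Ω a (u - uh) ^ 2 = A2 + 2 * C + B2 := by
      rw [show energyNorm Ω a (u - uh)
          = Real.sqrt (∫ x in Ω, a x * ‖gradient (u - uh) x‖ ^ 2) from rfl,
        Real.sq_sqrt hPnn, hPint]
    rw [hPsq, hE1eq, hE2eq]
    have hexp : (Real.sqrt A2 + Real.sqrt B2) ^ 2
        = A2 + 2 * (Real.sqrt A2 * Real.sqrt B2) + B2 := by
      rw [add_sq, Real.sq_sqrt hA2, Real.sq_sqrt hB2]; ring
    rw [hexp]
    linarith [hCS]
  clear_value A2 B2 C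
  -- numeric estimates
  have hhp : h ≤ h ^ p := by
    calc h = h ^ (1:ℝ) := (Real.rpow_one h).symm
      _ ≤ h ^ p := Real.rpow_le_rpow_of_exponent_ge hh0 hh1 hp1
  have hhppos : 0 < h ^ p := Real.rpow_pos_of_pos hh0 p
  have hh2le : h ^ 2 ≤ h ^ (1 + p) := by
    calc h ^ 2 = h ^ ((2:ℕ):ℝ) := by rw [Real.rpow_natCast]
      _ ≤ h ^ (1 + p) := by
          apply Real.rpow_le_rpow_of_exponent_ge hh0 hh1
          push_cast; linarith
  have hh1p : h ^ (1 + p) = h * h ^ p := by rw [Real.rpow_add hh0, Real.rpow_one]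
  have hs3 : 0 ≤ Real.sqrt c₃ := Real.sqrt_nonneg c₃
  have hE2le : energyNorm Ω a (util - uh)
      ≤ energyNorm Ω atil (util - uh) + Real.sqrt c₃ * h := by
    apply aux_sqrt_bound hE2nn hEtnn (mul_nonneg hs3 hh0.le)
    have hc3h : (Real.sqrt c₃ * h) ^ 2 = c₃ * h ^ 2 := by
      rw [mul_pow, Real.sq_sqrt hc₃]
    rw [hc3h]
    exact (abs_le.mp h3).2
  have hE2le' : energyNorm Ω a (util - uh) ≤ (c₂ + Real.sqrt c₃) * h ^ p := by
    have hmono : Real.sqrt c₃ * h ≤ Real.sqrt c₃ * h ^ p :=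
      mul_le_mul_of_nonneg_left hhp hs3
    linarith [hE2le, h2, hmono]
  have hE2sqle : energyNorm Ω a (util - uh) ^ 2
      ≤ energyNorm Ω a u ^ 2 - energyNorm Ω atil uh ^ 2 + (c₃ + c₄) * h ^ 2 := by
    have h3' := (abs_le.mp h3).2
    have h5' := (abs_le.mp h5).1
    linarith [h3', h5', h4]
  have habs' : energyNorm Ω a u ^ 2 - energyNorm Ω atil uh ^ 2
      ≤ |energyNorm Ω a u ^ 2 - energyNorm Ω atil uh ^ 2| := le_abs_self _
  have hcrossle : 2 * energyNorm Ω a (u - util) * energyNorm Ω a (util - uh)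
      ≤ 2 * c₁ * (c₂ + Real.sqrt c₃) * h ^ (1 + p) := by
    rw [hh1p]
    have h1' : (0:ℝ) ≤ c₂ + Real.sqrt c₃ := by positivity
    calc 2 * energyNorm Ω a (u - util) * energyNorm Ω a (util - uh)
        ≤ 2 * (c₁ * h) * ((c₂ + Real.sqrt c₃) * h ^ p) := by
          apply mul_le_mul _ hE2le' hE2nn
          · linarith [h1, hh0.le]
          · have := mul_nonneg hc₁ hh0.le
            linarith
      _ = 2 * c₁ * (c₂ + Real.sqrt c₃) * (h * h ^ p) := by ring
  have hE1sqle : energyNorm Ω a (u - util) ^ 2 ≤ c₁ ^ 2 * h ^ 2 := by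
    have := pow_le_pow_left₀ hE1nn h1 2
    rwa [mul_pow] at this
  calc energyNorm Ω a (u - uh) ^ 2
      ≤ (energyNorm Ω a (u - util) + energyNorm Ω a (util - uh)) ^ 2 := hmain
    _ = energyNorm Ω a (u - util) ^ 2
        + 2 * energyNorm Ω a (u - util) * energyNorm Ω a (util - uh)
        + energyNorm Ω a (util - uh) ^ 2 := by ring
    _ ≤ c₁ ^ 2 * h ^ 2 + 2 * c₁ * (c₂ + Real.sqrt c₃) * h ^ (1 + p)
        + (energyNorm Ω a u ^ 2 - energyNorm Ω atil uh ^ 2 + (c₃ + c₄) * h ^ 2) :=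
        add_le_add (add_le_add hE1sqle hcrossle) hE2sqle
    _ ≤ |energyNorm Ω a u ^ 2 - energyNorm Ω atil uh ^ 2|
        + (2 * c₁ * (c₂ + Real.sqrt c₃) + c₁ ^ 2 + c₃ + c₄) * h ^ (1 + p) := by
        have k1 : c₁ ^ 2 * h ^ 2 ≤ c₁ ^ 2 * h ^ (1 + p) :=
          mul_le_mul_of_nonneg_left hh2le (sq_nonneg c₁)
        have k2 : (c₃ + c₄) * h ^ 2 ≤ (c₃ + c₄) * h ^ (1 + p) :=
          mul_le_mul_of_nonneg_left hh2le (add_nonneg hc₃ hc₄)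
        linarith [habs', k1, k2]
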